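/- arXiv:2005.11551 — 8 statements merged into one kernel-verified Lean document; each statement's English description precedes it below -/
import Mathlib

section
/- Let C and D be categories with a dual adjunction given by Spc : D ⥤ Cᵒᵖ left adjoint to Pred : Cᵒᵖ ⥤ D with hom-set equivalence θ. Let O be an object of D, let I and X be objects of C, let i : I ⟶ X and f : X ⟶ (Spc O).unop be morphisms in C, and let t₁, …, tₖ : X ⟶ X be a finite list of endomorphisms of X. Then the adjoint transpose O ⟶ Pred(op I) of the composite i ≫ t₁ ≫ ⋯ ≫ tₖ ≫ f : I ⟶ (Spc O).unop equals the composite (adjoint transpose of f) ≫ Pred.map tₖ.op ≫ ⋯ ≫ Pred.map t₁.op ≫ Pred.map i.op. In other words, the dual adjoint functors reverse the word of transition morphisms, so they reverse the language accepted by an automaton. -/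
open CategoryTheory Opposite

private lemma foldr_shift {C : Type*} [Category C] {D : Type*} [Category D]
    (Pred : Cᵒᵖ ⥤ D) {X : C} {Z : D} (l : List (X ⟶ X))
    (b : Pred.obj (op X) ⟶ Z) :
    l.foldr (fun t acc => Pred.map t.op ≫ acc) b =
      l.foldr (fun t acc => Pred.map t.op ≫ acc) (𝟙 _) ≫ b := by
  induction l with
  | nil => simp
  | cons t l ih => simp [ih]

private lemma map_fold {C : Type*} [Category C] {D : Type*} [Category D]
    (Pred : Cᵒᵖ ⥤ D) {X : C} (ts : List (X ⟶ X)) :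
    Pred.map ((ts.foldr (· ≫ ·) (𝟙 X)).op) =
      ts.reverse.foldr (fun t acc => Pred.map t.op ≫ acc) (𝟙 (Pred.obj (op X))) := by
  induction ts with
  | nil => simp
  | cons t ts ih =>
      simp only [List.foldr, List.reverse_cons, List.foldr_append, List.foldr]
      rw [foldr_shift, ← ih]
      have : ((t ≫ ts.foldr (· ≫ ·) (𝟙 X)).op : op X ⟶ op X)
          = (ts.foldr (· ≫ ·) (𝟙 X)).op ≫ t.op := rfl
      simp [this]

/-- For a dual adjunction `Spc ⊣ Pred` between `C` and `D` (with
`Spc : D ⥤ Cᵒᵖ`) with hom-set equivalence `θ`, an object `O` of `D`, morphisms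
`i : I ⟶ X` and `f : X ⟶ (Spc O).unop` in `C` and a finite list `ts = [t₁, …, tₖ]` of
endomorphisms of `X`, the adjoint transpose `O ⟶ Pred (op I)` of the composite
`i ≫ t₁ ≫ ⋯ ≫ tₖ ≫ f` equals
`(adjoint transpose of f) ≫ Pred.map tₖ.op ≫ ⋯ ≫ Pred.map t₁.op ≫ Pred.map i.op`:
the dual adjoint functors reverse the word of transition morphisms, hence reverse the
language accepted by an automaton. -/
theorem stmt_1 {C : Type*} [Category C] {D : Type*} [Category D]
    (Spc : D ⥤ Cᵒᵖ) (Pred : Cᵒᵖ ⥤ D) (adj : Spc ⊣ Pred)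
    {I X : C} (O : D) (i : I ⟶ X) (f : X ⟶ (Spc.obj O).unop)
    (ts : List (X ⟶ X)) :
    adj.homEquiv O (op I)
        (Quiver.Hom.op (i ≫ ts.foldr (· ≫ ·) (𝟙 X) ≫ f)) =
      adj.homEquiv O (op X) (Quiver.Hom.op f) ≫
        (ts.reverse.foldr (fun t acc => Pred.map t.op ≫ acc) (𝟙 (Pred.obj (op X)))) ≫
        Pred.map i.op := by
  have h : (Quiver.Hom.op (i ≫ ts.foldr (· ≫ ·) (𝟙 X) ≫ f) : Spc.obj O ⟶ op I)
      = Quiver.Hom.op f ≫ (ts.foldr (· ≫ ·) (𝟙 X)).op ≫ i.op := by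
    simp
  rw [h, Adjunction.homEquiv_naturality_right, Pred.map_comp, map_fold]
end

section
/- Let 𝒜 = (X, δ, x₀, F) be a deterministic automaton over an alphabet Σ that is reachable, i.e., for every x : X there exists w : List Σ with δ* w x₀ = x. Then the reversed subset automaton det(rev(𝒜)) is observable: for all S S' : Set X, if for every word w : List Σ one has x₀ ∈ Δ* w S ↔ x₀ ∈ Δ* w S', then S = S'. (The reachable part on the dual side yields an observable automaton.) -/
lemma mem_foldl_rev {A X : Type*} (δ : A → X → X) (S : Set X) :
    ∀ (w : List A) (x : X),
      x ∈ w.foldl (fun S a => {x | δ a x ∈ S}) S ↔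
      w.reverse.foldl (fun x a => δ a x) x ∈ S := by
  intro w
  induction w generalizing S with
  | nil => simp
  | cons a w ih =>
      intro x
      simp only [List.foldl_cons, List.reverse_cons, List.foldl_append, List.foldl_cons,
        List.foldl_nil]
      exact ih _ x

/-- If the deterministic automaton `(X, δ, x₀, F)` is reachable, then the
reversed subset automaton (with transitions `Δ a S = {x | δ a x ∈ S}` and initial state
`F`) is observable: two states `S S' : Set X` accepting the same language are equal. -/
theorem stmt_6 {A X : Type*} (δ : A → X → X) (x₀ : X) (F : Set X)
    (hreach : ∀ x : X, ∃ w : List A, w.foldl (fun x a => δ a x) x₀ = x)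
    (S S' : Set X)
    (h : ∀ w : List A,
        x₀ ∈ w.foldl (fun S a => {x | δ a x ∈ S}) S ↔
        x₀ ∈ w.foldl (fun S a => {x | δ a x ∈ S}) S') :
    S = S' := by
  ext x
  obtain ⟨w, hw⟩ := hreach x
  have := h w.reverse
  rw [mem_foldl_rev, mem_foldl_rev, List.reverse_reverse, hw] at this
  exact this
end

section
/- Correctness of Brzozowski's double-reversal algorithm: let 𝒜 = (X, δ, x₀, F) be a deterministic automaton over an alphabet Σ. Let B(𝒜) denote the reachable part of the reversed subset automaton det(rev(𝒜)): its state type is the subtype {S : Set X // ∃ w : List Σ, Δ* w F = S}, its transitions, initial state and accepting states are those of det(rev(𝒜)) restricted to this subtype (well defined since Δ a (Δ* w F) = Δ* (w ++ [a]) F). Then the deterministic automaton B(B(𝒜)) is reachable (every state is reached from the initial state by some word), observable (any two states accepting the same language are equal), and accepts exactly the language L(𝒜) accepted by 𝒜; i.e., B(B(𝒜)) is a minimal deterministic automaton for L(𝒜). -/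
universe u v

/-- A deterministic automaton over an alphabet `A`: a type of states, transitions,
an initial state, and a set of accepting states. -/
structure DetAut (A : Type u) : Type (max u (v + 1)) where
  State : Type v
  tr : A → State → State
  init : State
  acc : Set State

namespace DetAut

variable {A : Type u}

/-- Extended transition map: `δ* w x = w.foldl (fun x a => δ a x) x`. -/
def steps (M : DetAut.{u, v} A) (w : List A) (x : M.State) : M.State :=
  w.foldl (fun x a => M.tr a x) x

/-- The language accepted by a deterministic automaton. -/
def lang (M : DetAut.{u, v} A) : Set (List A) :=
  {w | M.steps w M.init ∈ M.acc}

/-- The reversed subset automaton `det(rev(M))`: states are subsets of states of `M`,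
transitions are `Δ a S = {x | δ a x ∈ S}`, the initial state is the set of accepting
states of `M`, and a subset is accepting iff it contains the initial state of `M`. -/
def rev (M : DetAut.{u, v} A) : DetAut.{u, v} A where
  State := Set M.State
  tr a S := {x | M.tr a x ∈ S}
  init := M.acc
  acc := {S | M.init ∈ S}

/-- The reachable part of a deterministic automaton: states reachable from the initial
state by some word, with the restricted transitions, initial state and accepting
states.  (Well defined since `δ* (w ++ [a]) x₀ = δ a (δ* w x₀)`.) -/
def reach (M : DetAut.{u, v} A) : DetAut.{u, v} A where
  State := {x : M.State // ∃ w : List A, M.steps w M.init = x}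
  tr a x := ⟨M.tr a x.1, by
    obtain ⟨w, hw⟩ := x.2
    refine ⟨w ++ [a], ?_⟩
    simp only [steps, List.foldl_append, List.foldl_cons, List.foldl_nil]
    rw [show List.foldl (fun x a => M.tr a x) M.init w = x.1 from hw]⟩
  init := ⟨M.init, ⟨[], rfl⟩⟩
  acc := {x | x.1 ∈ M.acc}

def toSet (M : DetAut.{u, v} A) (S : M.rev.State) : Set M.State := S

def revSteps (M : DetAut.{u, v} A) (w : List A) (S : Set M.State) : Set M.State :=
  M.rev.steps w S

theorem steps_reach_fst (M : DetAut.{u, v} A) (w : List A) (x : M.reach.State) :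
    (M.reach.steps w x).1 = M.steps w x.1 := by
  induction w generalizing x with
  | nil => rfl
  | cons a w ih =>
      show (M.reach.steps w (M.reach.tr a x)).1 = M.steps w (M.tr a x.1)
      rw [ih]
      rfl

theorem mem_rev_steps (M : DetAut.{u, v} A) (w : List A) (S : Set M.State) (x : M.State) :
    x ∈ M.revSteps w S ↔ M.steps w.reverse x ∈ S := by
  induction w generalizing S with
  | nil => rfl
  | cons a w ih =>
      show x ∈ M.revSteps w {y | M.tr a y ∈ S} ↔ _
      rw [ih]
      show M.tr a (M.steps w.reverse x) ∈ S ↔ M.steps (a :: w).reverse x ∈ S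
      simp [steps, List.foldl_append]

theorem reach_reachable (M : DetAut.{u, v} A) (s : M.reach.State) :
    ∃ w : List A, M.reach.steps w M.reach.init = s := by
  obtain ⟨w, hw⟩ := s.2
  exact ⟨w, Subtype.ext (by rw [steps_reach_fst]; exact hw)⟩

theorem lang_reach (M : DetAut.{u, v} A) : M.reach.lang = M.lang := by
  ext w
  show M.reach.steps w M.reach.init ∈ M.reach.acc ↔ _
  show (M.reach.steps w M.reach.init).1 ∈ M.acc ↔ _
  rw [steps_reach_fst]
  rfl

theorem lang_rev (M : DetAut.{u, v} A) : M.rev.lang = {w | w.reverse ∈ M.lang} := by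
  ext w
  show M.init ∈ M.revSteps w M.acc ↔ _
  rw [mem_rev_steps]
  rfl

end DetAut

/-- Correctness of Brzozowski's double-reversal algorithm.  With
`B(M) = reach (rev M)` the reachable part of the reversed subset automaton of `M`,
the automaton `B(B(M))` is reachable, observable, and accepts exactly the language
of `M`; i.e. `B(B(M))` is a minimal deterministic automaton for the language of `M`. -/
theorem stmt_7 {A : Type u} (M : DetAut.{u, v} A) :
    (∀ s : (M.rev.reach.rev.reach).State,
        ∃ w : List A, (M.rev.reach.rev.reach).steps w (M.rev.reach.rev.reach).init = s) ∧
    (∀ s s' : (M.rev.reach.rev.reach).State,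
        (∀ w : List A,
            (M.rev.reach.rev.reach).steps w s ∈ (M.rev.reach.rev.reach).acc ↔
            (M.rev.reach.rev.reach).steps w s' ∈ (M.rev.reach.rev.reach).acc) →
          s = s') ∧
    (M.rev.reach.rev.reach).lang = M.lang := by
  set N := M.rev.reach with hN
  refine ⟨DetAut.reach_reachable _, ?_, ?_⟩
  · intro s s' h
    apply Subtype.ext
    show N.toSet s.1 = N.toSet s'.1
    refine Set.ext fun y => ?_
    obtain ⟨v, hv⟩ := DetAut.reach_reachable M.rev y
    have key : ∀ t : N.rev.reach.State, ∀ w : List A,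
        N.rev.reach.steps w t ∈ N.rev.reach.acc ↔
          N.steps w.reverse N.init ∈ N.toSet t.1 := by
      intro t w
      show (N.rev.reach.steps w t).1 ∈ N.rev.acc ↔ _
      rw [DetAut.steps_reach_fst]
      show N.init ∈ N.revSteps w (N.toSet t.1) ↔ _
      rw [DetAut.mem_rev_steps]
    have h2 := (key s v.reverse).symm.trans ((h v.reverse).trans (key s' v.reverse))
    rw [List.reverse_reverse] at h2
    have hv' : N.steps v N.init = y := hv
    rw [hv'] at h2
    exact h2
  · rw [DetAut.lang_reach, DetAut.lang_rev, DetAut.lang_reach, DetAut.lang_rev]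
    simp
end

section
/- Let R be a principal ideal domain (a commutative integral domain in which every ideal is principal) and let Σ be a type. For every R-weighted automaton (i, t, f) with n states recognizing the formal power series L : List Σ → R, there exist a natural number m ≤ n and an R-weighted automaton (i', t', f') with m states that recognizes the same series L and is both reachable and observable. In other words, the minimal weighted automaton over a principal ideal domain exists and has a state space of size at most that of the original automaton. -/
open Matrix

section Stmt8Aux

variable {R : Type*} [CommRing R] {A : Type*}

theorem stmt8_foldl_comm {M N : Type*} (g : M → N) (T : A → M → M) (S : A → N → N)
    (h : ∀ a x, g (T a x) = S a (g x)) :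
    ∀ (w : List A) (x : M), g (w.foldl (fun y a => T a y) x) = w.foldl (fun y a => S a y) (g x)
  | [], _ => rfl
  | a :: w, x => by
    simp only [List.foldl_cons]
    rw [stmt8_foldl_comm g T S h w (T a x), h]

/-- dot product with a fixed vector as a linear map. -/
def stmt8_dotL {n : ℕ} (f : Fin n → R) : (Fin n → R) →ₗ[R] R where
  toFun v := f ⬝ᵥ v
  map_add' x y := by simp [dotProduct_add]
  map_smul' c x := by simp [dotProduct_smul]

def stmt8_foldlLin {M : Type*} [AddCommMonoid M] [Module R M] (T : A → M →ₗ[R] M) :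
    List A → M →ₗ[R] M
  | [] => LinearMap.id
  | a :: w => stmt8_foldlLin T w ∘ₗ T a

theorem stmt8_foldlLin_apply {M : Type*} [AddCommMonoid M] [Module R M] (T : A → M →ₗ[R] M) :
    ∀ (w : List A) (x : M), stmt8_foldlLin T w x = w.foldl (fun y a => T a y) x
  | [], _ => rfl
  | a :: w, x => by
    simp only [stmt8_foldlLin, LinearMap.comp_apply, List.foldl_cons]
    exact stmt8_foldlLin_apply T w (T a x)

end Stmt8Aux

set_option maxHeartbeats 1000000 in
/-- Over a principal ideal domain `R`, every `R`-weighted automaton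
`(i, t, f)` with `n` states recognizing the formal power series `L : List A → R`
admits an equivalent `R`-weighted automaton with `m ≤ n` states recognizing the same
series which is both reachable (the runs span the whole state space) and observable
(the observation map into series is injective): the minimal weighted automaton over a
PID exists and has a state space of size at most that of the original automaton. -/
theorem stmt_8 {R : Type*} [CommRing R] [IsDomain R] [IsPrincipalIdealRing R]
    (A : Type*) (n : ℕ) (i f : Fin n → R) (t : A → Matrix (Fin n) (Fin n) R) :
    ∃ m : ℕ, m ≤ n ∧
      ∃ (i' f' : Fin m → R) (t' : A → Matrix (Fin m) (Fin m) R),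
        (∀ w : List A,
            f' ⬝ᵥ (w.foldl (fun v a => t' a *ᵥ v) i') =
            f ⬝ᵥ (w.foldl (fun v a => t a *ᵥ v) i)) ∧
        Submodule.span R (Set.range fun w : List A => w.foldl (fun v a => t' a *ᵥ v) i') = ⊤ ∧
        Function.Injective (fun (v : Fin m → R) (w : List A) =>
          f' ⬝ᵥ (w.foldl (fun u a => t' a *ᵥ u) v)) := by
  classical
  -- the run function and reachability submodule
  set run : List A → (Fin n → R) := fun w => w.foldl (fun v a => t a *ᵥ v) i with hrun
  set V : Submodule R (Fin n → R) := Submodule.span R (Set.range run) with hV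
  have run_mem : ∀ w, run w ∈ V := fun w => Submodule.subset_span ⟨w, rfl⟩
  have ht_mem : ∀ (a : A), ∀ v ∈ V, (t a).mulVecLin v ∈ V := by
    intro a v hv
    induction hv using Submodule.span_induction with
    | mem x hx =>
      obtain ⟨w, rfl⟩ := hx
      have : (t a).mulVecLin (run w) = run (w ++ [a]) := by
        simp [hrun, List.foldl_append, Matrix.mulVecLin_apply]
      rw [this]; exact run_mem _
    | zero => simpa using V.zero_mem
    | add x y _ _ hx hy => rw [map_add]; exact V.add_mem hx hy
    | smul c x _ hx => rw [_root_.map_smul]; exact V.smul_mem c hx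
  -- restricted transition maps
  set T : A → V →ₗ[R] V := fun a => ((t a).mulVecLin).restrict (ht_mem a) with hT
  have Tcoe : ∀ (a : A) (x : V), ((T a x : V) : Fin n → R) = t a *ᵥ (x : Fin n → R) :=
    fun a x => rfl
  have coe_foldl : ∀ (w : List A) (x : V),
      ((w.foldl (fun y a => T a y) x : V) : Fin n → R) =
        w.foldl (fun v a => t a *ᵥ v) (x : Fin n → R) :=
    fun w x => stmt8_foldl_comm (fun y : V => (y : Fin n → R)) (fun a y => T a y)
      (fun a v => t a *ᵥ v) Tcoe w x
  set iV : V := ⟨i, run_mem []⟩ with hiV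
  set fV : V →ₗ[R] R := (stmt8_dotL f) ∘ₗ V.subtype with hfV
  set Φ : V →ₗ[R] (List A → R) :=
    LinearMap.pi (fun w : List A => fV ∘ₗ stmt8_foldlLin T w) with hΦ
  have Φ_apply : ∀ (x : V) (w : List A),
      Φ x w = f ⬝ᵥ (w.foldl (fun v a => t a *ᵥ v) (x : Fin n → R)) := by
    intro x w
    show fV (stmt8_foldlLin T w x) = _
    rw [stmt8_foldlLin_apply]
    show f ⬝ᵥ ((w.foldl (fun y a => T a y) x : V) : Fin n → R) = _
    rw [coe_foldl]
  set K : Submodule R V := LinearMap.ker Φ with hK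
  have hTK : ∀ a : A, K ≤ K.comap (T a) := by
    intro a x hx
    have hx0 : Φ x = 0 := hx
    simp only [Submodule.mem_comap, hK, LinearMap.mem_ker]
    funext w
    have h1 : Φ (T a x) w = Φ x (a :: w) := by
      rw [Φ_apply, Φ_apply, Tcoe, List.foldl_cons]
    rw [h1, hx0]; rfl
  have hKf : K ≤ LinearMap.ker fV := by
    intro x hx
    have hx0 : Φ x = 0 := hx
    have : Φ x [] = 0 := by rw [hx0]; rfl
    simpa [Φ_apply, hfV, stmt8_dotL] using this
  set Tbar : A → (V ⧸ K) →ₗ[R] (V ⧸ K) := fun a => Submodule.mapQ K K (T a) (hTK a) with hTbar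
  set fbar : (V ⧸ K) →ₗ[R] R := K.liftQ fV hKf with hfbar
  set Φbar : (V ⧸ K) →ₗ[R] (List A → R) := K.liftQ Φ le_rfl with hΦbar
  have hΦbar_inj : Function.Injective Φbar :=
    LinearMap.ker_eq_bot.mp (Submodule.ker_liftQ_eq_bot K Φ le_rfl le_rfl)
  -- finiteness, torsion-freeness, freeness
  haveI : Module.Finite R V := Module.Finite.iff_fg.mpr (IsNoetherian.noetherian V)
  haveI : Module.Finite R (V ⧸ K) := Module.Finite.quotient R K
  haveI : NoZeroSMulDivisors R (V ⧸ K) := by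
    refine ⟨fun {c x} h => ?_⟩
    by_cases hc : c = 0
    · exact Or.inl hc
    refine Or.inr (hΦbar_inj ?_)
    rw [map_zero]
    have h2 : c • Φbar x = 0 := by rw [← _root_.map_smul, h, map_zero]
    funext w
    have h3 : c * Φbar x w = 0 := congrFun h2 w
    rcases mul_eq_zero.mp h3 with h4 | h4
    · exact absurd h4 hc
    · exact h4
  haveI : Module.Free R (V ⧸ K) := Module.free_of_finite_type_torsion_free'
  set m := Module.finrank R (V ⧸ K) with hm
  set b : Module.Basis (Fin m) R (V ⧸ K) := Module.finBasis R (V ⧸ K) with hb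
  have hmn : m ≤ n := by
    apply Module.finrank_le_of_rank_le
    refine le_trans (rank_quotient_le K) (le_trans (Submodule.rank_le V) ?_)
    rw [rank_fin_fun]
  -- the minimized automaton
  set π : V →ₗ[R] V ⧸ K := K.mkQ with hπ
  set i' : Fin m → R := b.equivFun (π iV) with hi'
  set f' : Fin m → R := fun j => fbar (b j) with hf'
  set t' : A → Matrix (Fin m) (Fin m) R := fun a => LinearMap.toMatrix b b (Tbar a) with ht'
  have hbe : ∀ x : V ⧸ K, b.equivFun x = ⇑(b.repr x) := fun x => b.equivFun_apply x
  have hstep : ∀ (a : A) (x : V ⧸ K), t' a *ᵥ b.equivFun x = b.equivFun (Tbar a x) := by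
    intro a x
    rw [hbe, hbe, ht']
    exact LinearMap.toMatrix_mulVec_repr b b (Tbar a) x
  have hfold1 : ∀ (w : List A) (x : V ⧸ K),
      w.foldl (fun v a => t' a *ᵥ v) (b.equivFun x) = b.equivFun (w.foldl (fun y a => Tbar a y) x) :=
    fun w x => (stmt8_foldl_comm b.equivFun (fun a y => Tbar a y) (fun a v => t' a *ᵥ v)
      (fun a x => (hstep a x).symm) w x).symm
  have hfold2 : ∀ (w : List A) (x : V),
      w.foldl (fun y a => Tbar a y) (π x) = π (w.foldl (fun y a => T a y) x) :=
    fun w x => (stmt8_foldl_comm π (fun a y => T a y) (fun a y => Tbar a y)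
      (fun a x => by simp [hTbar, hπ]) w x).symm
  have hdot : ∀ x : V ⧸ K, f' ⬝ᵥ b.equivFun x = fbar x := by
    intro x
    conv_rhs => rw [← b.sum_equivFun x]
    rw [map_sum]
    simp only [dotProduct, hf', _root_.map_smul, smul_eq_mul]
    exact Finset.sum_congr rfl fun j _ => mul_comm _ _
  have hfbar_mk : ∀ x : V, fbar (π x) = fV x := fun x => by simp [hfbar, hπ]
  have hΦbar_mk : ∀ x : V, Φbar (π x) = Φ x := fun x => by simp [hΦbar, hπ]
  have key : ∀ (v : Fin m → R) (w : List A),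
      f' ⬝ᵥ (w.foldl (fun u a => t' a *ᵥ u) v) = Φbar (b.equivFun.symm v) w := by
    intro v w
    conv_lhs => rw [show v = b.equivFun (b.equivFun.symm v) from (b.equivFun.apply_symm_apply v).symm]
    rw [hfold1, hdot]
    obtain ⟨y, hy⟩ := K.mkQ_surjective (b.equivFun.symm v)
    rw [← hy, show K.mkQ y = π y from rfl, hfold2, hfbar_mk, hΦbar_mk, Φ_apply, ← coe_foldl]
    rfl
  refine ⟨m, hmn, i', f', t', ?_, ?_, ?_⟩
  · -- same series
    intro w
    rw [hi', hfold1, hdot]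
    rw [hfold2, hfbar_mk]
    show f ⬝ᵥ ((w.foldl (fun y a => T a y) iV : V) : Fin n → R) = _
    rw [coe_foldl]
  · -- reachable
    set g : V →ₗ[R] (Fin m → R) := (b.equivFun : (V ⧸ K) ≃ₗ[R] (Fin m → R)).toLinearMap ∘ₗ π with hg
    have hfun : (fun w : List A => w.foldl (fun v a => t' a *ᵥ v) i') =
        g ∘ (fun w : List A => w.foldl (fun y a => T a y) iV) := by
      funext w
      rw [hi', hfold1, hfold2]
      rfl
    rw [hfun, Set.range_comp, Submodule.span_image]
    have hspanV : Submodule.span R (Set.range (fun w : List A => w.foldl (fun y a => T a y) iV)) = ⊤ := by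
      apply Submodule.map_injective_of_injective V.injective_subtype
      rw [Submodule.map_span, Submodule.map_top, Submodule.range_subtype, ← Set.range_comp]
      have : (V.subtype ∘ fun w : List A => w.foldl (fun y a => T a y) iV) = run :=
        funext fun w => coe_foldl w iV
      rw [this]
    rw [hspanV, Submodule.map_top, LinearMap.range_eq_top]
    exact b.equivFun.surjective.comp (Submodule.mkQ_surjective K)
  · -- observable
    have hfun : (fun (v : Fin m → R) (w : List A) => f' ⬝ᵥ (w.foldl (fun u a => t' a *ᵥ u) v)) =
        (fun x : V ⧸ K => (Φbar x : List A → R)) ∘ ⇑b.equivFun.symm :=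
      funext fun v => funext fun w => key v w
    rw [hfun]
    exact hΦbar_inj.comp b.equivFun.symm.injective
end

section
/- For every alternating finite automaton 𝒜 = (X, δ, ι, F) over an alphabet Σ, the reversed deterministic automaton 𝒜' accepts exactly the reverse of the language of 𝒜: for every word w : List Σ, T w F ∈ ι if and only if δ' w.reverse F ∈ ι; that is, L(𝒜') = {w : List Σ | w.reverse ∈ L(𝒜)}. -/
/-- Backward run map of an alternating finite automaton:
`δ' [] A = A` and `δ' (a :: w) A = {s | δ' w A ∈ δ a s}`. -/
def afaBack {A X : Type*} (δ : A → X → Set (Set X)) : List A → Set X → Set X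
  | [], S => S
  | a :: w, S => {s | afaBack δ w S ∈ δ a s}

lemma afaBack_append {A X : Type*} (δ : A → X → Set (Set X)) (u v : List A) (S : Set X) :
    afaBack δ (u ++ v) S = afaBack δ u (afaBack δ v S) := by
  induction u with
  | nil => rfl
  | cons a u ih => simp [afaBack, ih]

lemma foldl_eq_afaBack {A X : Type*} (δ : A → X → Set (Set X)) (w : List A) (S : Set X) :
    w.foldl (fun S a => {x | S ∈ δ a x}) S = afaBack δ w.reverse S := by
  induction w generalizing S with
  | nil => rfl
  | cons a w ih =>
    simp [List.foldl_cons, ih, afaBack_append, afaBack]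

/-- For every alternating finite automaton `(X, δ, ι, F)`, the reversed
deterministic automaton accepts exactly the reverse of the language of the AFA:
for every word `w`, `T w F ∈ ι ↔ δ' w.reverse F ∈ ι`, i.e.
`L(𝒜') = {w | w.reverse ∈ L(𝒜)}`. -/
theorem stmt_10 {A X : Type*} (δ : A → X → Set (Set X)) (ι : Set (Set X)) (F : Set X) :
    (∀ w : List A, w.foldl (fun S a => {x | S ∈ δ a x}) F ∈ ι ↔ afaBack δ w.reverse F ∈ ι) ∧
    {w : List A | w.foldl (fun S a => {x | S ∈ δ a x}) F ∈ ι} =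
      {w : List A | w.reverse ∈ {u : List A | afaBack δ u F ∈ ι}} := by
  constructor
  · intro w; rw [foldl_eq_afaBack]
  · ext w; simp [foldl_eq_afaBack]
end

section
/- For every finite type Y, the assignment sending a subdistribution φ ∈ SubD(Y) to the ℝ-algebra homomorphism M ⧸ J →ₐ[ℝ] ℝ induced by evaluation of continuous functions at the point φ of K (this is well defined because every element of the ideal J vanishes at every subdistribution) is a bijection between SubD(Y) and the set of all ℝ-algebra homomorphisms M ⧸ J →ₐ[ℝ] ℝ; its inverse sends a homomorphism Φ to the subdistribution y ↦ Φ(π_y + J). -/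
open unitInterval

/-- Let `Y` be a finite type, `K := Y → unitInterval`, `M := C(K, ℝ)`,
`π_y : M` the projections, `π := ∑ y, π_y`, and `J` the ideal of `M` generated by
`|1 - π| - (1 - π)`.  The assignment sending a subdistribution `φ` on `Y` to the
ℝ-algebra homomorphism `M ⧸ J →ₐ[ℝ] ℝ` induced by evaluation at the point `φ` of `K`
(well defined since every element of `J` vanishes at every subdistribution) is a
bijection between the subdistributions on `Y` and the ℝ-algebra homomorphisms
`M ⧸ J →ₐ[ℝ] ℝ`, with inverse sending `Φ` to the subdistribution `y ↦ Φ (π_y + J)`. -/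
theorem stmt_13 (Y : Type) [Fintype Y] :
    let K := Y → unitInterval
    let M := C(K, ℝ)
    let proj : Y → M := fun y =>
      ⟨fun v => (v y : ℝ), continuous_subtype_val.comp (continuous_apply y)⟩
    let pi : M := ∑ y, proj y
    let J : Ideal M := Ideal.span {|1 - pi| - (1 - pi)}
    ∃ e : {φ : Y → unitInterval // ∑ y, (φ y : ℝ) ≤ 1} → ((M ⧸ J) →ₐ[ℝ] ℝ),
      (∀ (φ : {φ : Y → unitInterval // ∑ y, (φ y : ℝ) ≤ 1}) (m : M),
          e φ (Ideal.Quotient.mk J m) = m φ.1) ∧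
      Function.Bijective e ∧
      (∀ (φ : {φ : Y → unitInterval // ∑ y, (φ y : ℝ) ≤ 1}) (y : Y),
          (φ.1 y : ℝ) = e φ (Ideal.Quotient.mk J (proj y))) := by
  intro K M proj pi J
  have hpi : ∀ x : K, pi x = ∑ y, (x y : ℝ) := by
    intro x
    show (∑ y, proj y) x = _
    rw [ContinuousMap.sum_apply]
    rfl
  set g : M := |1 - pi| - (1 - pi) with hg
  have hgx : ∀ x : K, (∑ y, (x y : ℝ)) ≤ 1 → g x = 0 := by
    intro x hx
    have : g x = |1 - pi x| - (1 - pi x) := rfl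
    rw [this, hpi x, abs_of_nonneg (by linarith)]
    ring
  have hker : ∀ (x : K), (∑ y, (x y : ℝ)) ≤ 1 → ∀ m ∈ J, m x = 0 := by
    intro x hx m hm
    rw [Ideal.mem_span_singleton'] at hm
    obtain ⟨c, rfl⟩ := hm
    have : (c * g) x = c x * g x := rfl
    rw [this, hgx x hx, mul_zero]
  refine ⟨fun φ => Ideal.Quotient.liftₐ J (ContinuousMap.evalAlgHom ℝ ℝ φ.1)
      (fun m hm => hker φ.1 φ.2 m hm), ?_, ?_, ?_⟩
  · intro φ m
    simp only [Ideal.Quotient.liftₐ_apply, Ideal.Quotient.lift_mk]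
    rfl
  · constructor
    · intro φ ψ h
      ext y
      have h1 := congrArg (fun F : (M ⧸ J) →ₐ[ℝ] ℝ => F (Ideal.Quotient.mk J (proj y))) h
      simp only [Ideal.Quotient.liftₐ_apply, Ideal.Quotient.lift_mk] at h1
      have h2 : ((φ.1 y : ℝ)) = ((ψ.1 y : ℝ)) := h1
      exact h2
    · intro Φ
      set ψ : M →ₐ[ℝ] ℝ := Φ.comp (Ideal.Quotient.mkₐ ℝ J) with hψ
      obtain ⟨x, hx⟩ := (WeakDual.CharacterSpace.continuousMapEval_bijective K ℝ).2
        (WeakDual.CharacterSpace.equivAlgHom.symm ψ)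
      have heval : ∀ m : M, ψ m = m x := by
        intro m
        have := congrArg (fun χ => (χ : WeakDual.characterSpace ℝ M) m) hx
        simp at this
        exact this.symm
      have hgJ : ψ g = 0 := by
        have : Ideal.Quotient.mk J g = 0 :=
          (Ideal.Quotient.eq_zero_iff_mem).2 (Ideal.subset_span rfl)
        simp [hψ, Ideal.Quotient.mkₐ_eq_mk, this]
      have hx1 : (∑ y, (x y : ℝ)) ≤ 1 := by
        have h0 : g x = 0 := by rw [← heval]; exact hgJ
        have h1 : g x = |1 - pi x| - (1 - pi x) := rfl
        rw [h1] at h0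
        have h2 : |1 - pi x| = 1 - pi x := by linarith
        have h3 : 0 ≤ 1 - pi x := h2 ▸ abs_nonneg _
        rw [hpi x] at h3
        linarith
      refine ⟨⟨x, hx1⟩, ?_⟩
      apply AlgHom.ext
      intro a
      obtain ⟨m, rfl⟩ := Ideal.Quotient.mk_surjective a
      show _ = Φ (Ideal.Quotient.mk J m)
      rw [show Φ (Ideal.Quotient.mk J m) = ψ m from rfl, heval m]
      simp only [Ideal.Quotient.liftₐ_apply, Ideal.Quotient.lift_mk]
      rfl
  · intro φ y
    simp only [Ideal.Quotient.liftₐ_apply, Ideal.Quotient.lift_mk]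
    rfl
end

section
/- For every deterministic Kripke model (S, δ, γ) over actions Σ and observations Ω, and every modal formula φ, the definable set ⟦φ⟧ belongs to the smallest collection of subsets of S that contains every trace-definable subset and Set.univ and is closed under complements and binary intersections. Hence the Boolean algebra of modally definable subsets of S is generated by the trace-definable subsets, i.e., trace logic is as expressive as the full modal logic over deterministic Kripke models. -/
/-- Modal formulas over actions `A` and observations `Ω`:
`φ ::= ω | ⟨a⟩φ | ⊤ | φ ∧ ψ | ¬φ`. -/
inductive MF (A Ω : Type*) : Type _ where
  | obs : Ω → MF A Ω
  | dia : A → MF A Ω → MF A Ω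
  | top : MF A Ω
  | and : MF A Ω → MF A Ω → MF A Ω
  | not : MF A Ω → MF A Ω

/-- Semantics of modal formulas over a deterministic Kripke model `(S, δ, γ)`. -/
def MF.sem {A Ω S : Type*} (δ : A → S → S) (γ : S → Set Ω) : MF A Ω → Set S
  | .obs ω => {s | ω ∈ γ s}
  | .dia a φ => {s | δ a s ∈ MF.sem δ γ φ}
  | .top => Set.univ
  | .and φ ψ => MF.sem δ γ φ ∩ MF.sem δ γ ψ
  | .not φ => (MF.sem δ γ φ)ᶜ

/-- For every deterministic Kripke model `(S, δ, γ)` and every modal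
formula `φ`, the definable set `⟦φ⟧` belongs to the smallest collection of subsets of
`S` containing every trace-definable subset and `Set.univ` and closed under
complements and binary intersections: the Boolean algebra of modally definable
subsets is generated by the trace-definable subsets, so trace logic is as expressive
as the full modal logic. -/
theorem stmt_16 {A Ω S : Type*} (δ : A → S → S) (γ : S → Set Ω) (φ : MF A Ω)
    (𝒞 : Set (Set S))
    (htrace : ∀ (w : List A) (ω : Ω),
      {s : S | ω ∈ γ (w.foldl (fun s a => δ a s) s)} ∈ 𝒞)
    (huniv : Set.univ ∈ 𝒞)
    (hcompl : ∀ U ∈ 𝒞, Uᶜ ∈ 𝒞)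
    (hinter : ∀ U ∈ 𝒞, ∀ V ∈ 𝒞, U ∩ V ∈ 𝒞) :
    MF.sem δ γ φ ∈ 𝒞 := by
  have key : ∀ (ψ : MF A Ω) (w : List A),
      {s : S | w.foldl (fun s a => δ a s) s ∈ MF.sem δ γ ψ} ∈ 𝒞 := by
    intro ψ
    induction ψ with
    | obs ω => intro w; exact htrace w ω
    | dia a φ ih =>
        intro w
        have := ih (w ++ [a])
        simpa [MF.sem, List.foldl_append] using this
    | top => intro w; simpa [MF.sem] using huniv
    | and φ ψ ihφ ihψ =>
        intro w
        have h := hinter _ (ihφ w) _ (ihψ w)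
        simpa [MF.sem, Set.setOf_and] using h
    | not φ ih =>
        intro w
        have h := hcompl _ (ih w)
        simpa [MF.sem, Set.compl_setOf] using h
  simpa using key φ []
end

section
/- The double-powerset is the free complete atomic Boolean algebra: for every type X, every complete atomic Boolean algebra B, and every function f : X → B, there exists a unique function h : Set (Set X) → B such that h preserves arbitrary suprema (h (⋃₀ T) = sSup (h '' T) for every T : Set (Set (Set X))), h preserves complements (h (Aᶜ) = (h A)ᶜ for every A : Set (Set X)), and h (η x) = f x for every x : X, where η x = {a : Set X | x ∈ a}. -/
/-- The double powerset is the free complete atomic Boolean algebra: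
for every type `X`, every complete atomic Boolean algebra `B` and every `f : X → B`,
there is a unique map `h : Set (Set X) → B` preserving arbitrary suprema and
complements and satisfying `h (η x) = f x` for all `x`, where `η x = {a | x ∈ a}`. -/
theorem stmt_17 (X : Type*) (B : Type*) [CompleteAtomicBooleanAlgebra B] (f : X → B) :
    ∃! h : Set (Set X) → B,
      (∀ T : Set (Set (Set X)), h (⋃₀ T) = sSup (h '' T)) ∧
      (∀ A : Set (Set X), h Aᶜ = (h A)ᶜ) ∧
      (∀ x : X, h {a : Set X | x ∈ a} = f x) := by
  classical
  set g : Set X → B := fun a => ⨅ x, if x ∈ a then f x else (f x)ᶜ with hg_def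
  have g_le_mem : ∀ (a : Set X) (x : X), x ∈ a → g a ≤ f x := by
    intro a x hx
    refine (iInf_le _ x).trans ?_
    simp [hx]
  have g_le_not : ∀ (a : Set X) (x : X), x ∉ a → g a ≤ (f x)ᶜ := by
    intro a x hx
    refine (iInf_le _ x).trans ?_
    simp [hx]
  have g_disj : ∀ a b : Set X, a ≠ b → g a ⊓ g b = ⊥ := by
    intro a b hab
    obtain ⟨x, hx⟩ : ∃ x, ¬(x ∈ a ↔ x ∈ b) := by
      by_contra h
      push_neg at h
      exact hab (Set.ext fun x => h x)
    by_cases hxa : x ∈ a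
    · have hxb : x ∉ b := fun hb => hx ⟨fun _ => hb, fun _ => hxa⟩
      have : g a ⊓ g b ≤ f x ⊓ (f x)ᶜ := inf_le_inf (g_le_mem a x hxa) (g_le_not b x hxb)
      simpa using le_bot_iff.mp (by simpa using this)
    · have hxb : x ∈ b := by
        by_contra hxb
        exact hx ⟨fun h => absurd h hxa, fun h => absurd h hxb⟩
      have : g a ⊓ g b ≤ (f x)ᶜ ⊓ f x := inf_le_inf (g_le_not a x hxa) (g_le_mem b x hxb)
      simpa using le_bot_iff.mp (by simpa using this)
  have g_top : (⨆ a : Set X, g a) = ⊤ := by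
    have hd := iInf_iSup_eq (f := fun (x : X) (b : Bool) => cond b (f x) (f x)ᶜ)
    have hL : (⨅ x : X, ⨆ b : Bool, cond b (f x) (f x)ᶜ) = ⊤ := by
      simp [iSup_bool_eq]
    apply top_unique
    rw [← hL, hd]
    refine iSup_le fun s => ?_
    refine le_iSup_of_le {x | s x = true} ?_
    refine iInf_mono fun x => ?_
    cases hsx : s x <;> simp [hg_def, Set.mem_setOf_eq, hsx]
  have hsupAll : ∀ A : Set (Set X), (⨆ a ∈ A, g a) ⊔ (⨆ a ∈ Aᶜ, g a) = ⊤ := by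
    intro A
    apply top_unique
    rw [← g_top]
    refine iSup_le fun a => ?_
    by_cases hA : a ∈ A
    · exact le_sup_of_le_left (le_iSup₂_of_le a hA le_rfl)
    · exact le_sup_of_le_right (le_iSup₂_of_le a hA le_rfl)
  have hbot : ∀ A : Set (Set X), (⨆ a ∈ A, g a) ⊓ (⨆ b ∈ Aᶜ, g b) = ⊥ := by
    intro A
    simp_rw [iSup_inf_eq, inf_iSup_eq]
    refine le_bot_iff.mp (iSup₂_le fun a ha => iSup₂_le fun b hb => ?_)
    exact le_of_eq (g_disj a b fun h => hb (h ▸ ha))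
  have hc : ∀ A : Set (Set X), (⨆ a ∈ Aᶜ, g a) = (⨆ a ∈ A, g a)ᶜ := by
    intro A
    have hic : IsCompl (⨆ a ∈ Aᶜ, g a) (⨆ a ∈ A, g a) :=
      ⟨disjoint_iff.mpr (by rw [inf_comm]; exact hbot A),
       codisjoint_iff.mpr (by rw [sup_comm]; exact hsupAll A)⟩
    exact hic.eq_compl
  have hsup : ∀ T : Set (Set (Set X)),
      (⨆ a ∈ ⋃₀ T, g a) = sSup ((fun A => ⨆ a ∈ A, g a) '' T) := by
    intro T
    rw [sSup_image]
    apply le_antisymm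
    · refine iSup₂_le fun a ha => ?_
      obtain ⟨t, ht, hat⟩ := ha
      exact le_iSup₂_of_le t ht (le_iSup₂_of_le a hat le_rfl)
    · exact iSup₂_le fun t ht => iSup₂_le fun a ha => le_iSup₂_of_le a ⟨t, ht, ha⟩ le_rfl
  have hη : ∀ x : X, (⨆ a ∈ {a : Set X | x ∈ a}, g a) = f x := by
    intro x
    apply le_antisymm
    · exact iSup₂_le fun a ha => g_le_mem a x ha
    · have h2 : (⨆ a ∈ {a : Set X | x ∈ a}ᶜ, g a) ≤ (f x)ᶜ :=
        iSup₂_le fun a ha => g_le_not a x ha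
      have h3 := compl_le_compl h2
      rw [compl_compl, hc, compl_compl] at h3
      exact h3
  refine ⟨fun A => ⨆ a ∈ A, g a, ⟨hsup, hc, hη⟩, ?_⟩
  intro h' ⟨hs, hcm, hgen⟩
  funext A
  have hsing : ∀ a : Set X, h' {a} = g a := by
    intro a
    set c : X → Set (Set X) := fun x => if x ∈ a then {s : Set X | x ∈ s}ᶜ else {s : Set X | x ∈ s} with hc_def
    have hA : ({a} : Set (Set X)) = (⋃₀ Set.range c)ᶜ := by
      ext b
      rw [Set.mem_singleton_iff, Set.mem_compl_iff]
      constructor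
      · intro hb hmem
        obtain ⟨ct, ⟨x, rfl⟩, hbt⟩ := hmem
        rw [hb] at hbt
        by_cases hx : x ∈ a
        · simp [hc_def, hx] at hbt
        · simp [hc_def, hx] at hbt
      · intro hb
        have hbx : ∀ x : X, b ∉ c x := fun x hx => hb ⟨c x, ⟨x, rfl⟩, hx⟩
        ext x
        by_cases hx : x ∈ a
        · have h1 := hbx x
          simp [hc_def, hx] at h1
          exact ⟨fun _ => hx, fun _ => h1⟩
        · have h1 := hbx x
          simp [hc_def, hx] at h1
          exact ⟨fun hxb => absurd hxb h1, fun hxa => absurd hxa hx⟩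
    have hval : ∀ x : X, h' (c x) = if x ∈ a then (f x)ᶜ else f x := by
      intro x
      by_cases hx : x ∈ a <;> simp only [hc_def, hx, if_true, if_false]
      · rw [hcm, hgen]
      · exact hgen x
    rw [hA, hcm, hs, ← Set.range_comp]
    rw [sSup_range]
    have : (⨆ x : X, (h' ∘ c) x) = ⨆ x : X, (if x ∈ a then (f x)ᶜ else f x) := by
      refine iSup_congr fun x => ?_
      exact hval x
    rw [this, compl_iSup]
    refine iInf_congr fun x => ?_
    by_cases hx : x ∈ a <;> simp [hg_def, hx]
  calc h' A = h' (⋃₀ ((fun a => ({a} : Set (Set X))) '' A)) := by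
        rw [Set.sUnion_image, Set.biUnion_of_singleton]
    _ = sSup (h' '' ((fun a => ({a} : Set (Set X))) '' A)) := hs _
    _ = sSup ((fun a => h' {a}) '' A) := by rw [Set.image_image]
    _ = sSup (g '' A) := by
        congr 1
        exact Set.image_congr fun a _ => hsing a
    _ = ⨆ a ∈ A, g a := by rw [sSup_image]
end
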